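/- Consider the matrix ODE along a curve: for continuous functions f, g : [0,1] → ℂ and a parameter t ∈ ℂ, let X(s,t) ∈ Matrix (Fin 2) (Fin 2) ℂ solve ∂ₛX(s,t) = X(s,t)·[[0, t·f(s)],[g(s), 0]] with X(0,t) = Id, and set M(t) = X(1,t). Suppose ∫₀¹ g(s) ds = 0 and that the map t ↦ M(t) is differentiable at t = 0. Then M(0) = Id, and the map λ ↦ M(λ⁻¹(λ−1)²), defined for λ ∈ ℂ \ {0}, has derivative 0 at λ = 1 (hence the closing conditions M̃(1) = Id and d_λM̃(1) = 0 hold at the Sym point λ₀ = 1). -/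

import Mathlib

attribute [local instance] Matrix.normedAddCommGroup Matrix.normedSpace

open Set

noncomputable def entryCLM (i j : Fin 2) : Matrix (Fin 2) (Fin 2) ℂ →L[ℝ] ℂ :=
  LinearMap.toContinuousLinearMap (Matrix.entryLinearMap ℝ ℂ i j)

lemma entry_hasDerivWithinAt {h : ℝ → Matrix (Fin 2) (Fin 2) ℂ}
    {d : Matrix (Fin 2) (Fin 2) ℂ} {s : Set ℝ} {x : ℝ}
    (hh : HasDerivWithinAt h d s x) (i j : Fin 2) :
    HasDerivWithinAt (fun r => h r i j) (d i j) s x :=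
  (entryCLM i j).hasFDerivAt.comp_hasDerivWithinAt x hh

/-- Lemma 2.4: for the monodromy `M(t) = X(1,t)` of `∂ₛX = X·[[0, t·f],[g, 0]]`,
`X(0,t) = Id`, with `∫₀¹ g = 0`, the closing conditions hold at the Sym point:
`M̃(1) = Id` and `d_λ M̃(1) = 0`, where `M̃(λ) = M(λ⁻¹(λ−1)²)`. -/
theorem closing_conditions (f g : ℝ → ℂ)
    (hf : ContinuousOn f (Set.Icc 0 1)) (hg : ContinuousOn g (Set.Icc 0 1))
    (X : ℝ → ℂ → Matrix (Fin 2) (Fin 2) ℂ)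
    (hode : ∀ t : ℂ, ∀ s ∈ Set.Icc (0:ℝ) 1,
      HasDerivWithinAt (fun s' => X s' t) (X s t * !![0, t * f s; g s, 0])
        (Set.Icc (0:ℝ) 1) s)
    (hinit : ∀ t : ℂ, X 0 t = 1)
    (M : ℂ → Matrix (Fin 2) (Fin 2) ℂ) (hM : M = fun t => X 1 t)
    (hgint : (∫ s in (0:ℝ)..1, g s) = 0)
    (hdiff : DifferentiableAt ℂ M 0) :
    M 0 = 1 ∧
    HasDerivAt (fun l : ℂ => M (l⁻¹ * (l - 1) ^ 2))
      (0 : Matrix (Fin 2) (Fin 2) ℂ) (1 : ℂ) := by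
  have key : M 0 = 1 := by
    set Y : ℝ → Matrix (Fin 2) (Fin 2) ℂ := fun s => X s 0 with hYdef
    have hYd : ∀ s ∈ Icc (0:ℝ) 1, ∀ i j : Fin 2, HasDerivWithinAt (fun r => Y r i j)
        ((Y s * !![0, 0 * f s; g s, 0]) i j) (Icc 0 1) s := by
      intro s hs i j
      exact entry_hasDerivWithinAt (hode 0 s hs) i j
    have hYcont : ∀ i j : Fin 2, ContinuousOn (fun r => Y r i j) (Icc 0 1) :=
      fun i j s hs => (hYd s hs i j).continuousWithinAt
    have hY0 : Y 0 = 1 := hinit 0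
    -- b entry (0,1) constant = 0
    have hb : ∀ s ∈ Icc (0:ℝ) 1, Y s 0 1 = 0 := by
      have := constant_of_has_deriv_right_zero (f := fun r => Y r 0 1)
        (hYcont 0 1) (fun x hx => by
          have h := (hYd x (Ico_subset_Icc_self hx) 0 1).mono_of_mem_nhdsWithin
            (Icc_mem_nhdsGE_of_mem hx)
          have : (Y x * !![0, 0 * f x; g x, 0]) 0 1 = 0 := by
            simp [Matrix.mul_apply, Fin.sum_univ_two]
          rwa [this] at h)
      intro s hs
      simpa [hY0, Matrix.one_apply] using this s hs
    -- d entry (1,1) constant = 1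
    have hd : ∀ s ∈ Icc (0:ℝ) 1, Y s 1 1 = 1 := by
      have := constant_of_has_deriv_right_zero (f := fun r => Y r 1 1)
        (hYcont 1 1) (fun x hx => by
          have h := (hYd x (Ico_subset_Icc_self hx) 1 1).mono_of_mem_nhdsWithin
            (Icc_mem_nhdsGE_of_mem hx)
          have : (Y x * !![0, 0 * f x; g x, 0]) 1 1 = 0 := by
            simp [Matrix.mul_apply, Fin.sum_univ_two]
          rwa [this] at h)
      intro s hs
      simpa [hY0, Matrix.one_apply] using this s hs
    -- a entry (0,0) constant = 1
    have ha : Y 1 0 0 = 1 := by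
      have := constant_of_has_deriv_right_zero (f := fun r => Y r 0 0)
        (hYcont 0 0) (fun x hx => by
          have h := (hYd x (Ico_subset_Icc_self hx) 0 0).mono_of_mem_nhdsWithin
            (Icc_mem_nhdsGE_of_mem hx)
          have : (Y x * !![0, 0 * f x; g x, 0]) 0 0 = 0 := by
            simp [Matrix.mul_apply, Fin.sum_univ_two, hb x (Ico_subset_Icc_self hx)]
          rwa [this] at h)
      have := this 1 (right_mem_Icc.2 zero_le_one)
      simpa [hY0, Matrix.one_apply] using this
    -- c entry (1,0): FTC
    have hc : Y 1 1 0 = 0 := by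
      have hFTC := intervalIntegral.integral_eq_sub_of_hasDeriv_right_of_le
        (f := fun r => Y r 1 0) (f' := g) zero_le_one (hYcont 1 0)
        (fun x hx => by
          have h := (hYd x (Ioo_subset_Icc_self hx) 1 0).mono_of_mem_nhdsWithin
            (Icc_mem_nhdsGT_of_mem ⟨hx.1.le, hx.2⟩)
          have : (Y x * !![0, 0 * f x; g x, 0]) 1 0 = g x := by
            simp [Matrix.mul_apply, Fin.sum_univ_two, hd x (Ioo_subset_Icc_self hx)]
          rwa [this] at h)
        (hg.intervalIntegrable_of_Icc zero_le_one)
      rw [hgint] at hFTC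
      have h0 : Y 0 1 0 = 0 := by simp [hY0, Matrix.one_apply]
      have h1 : Y 1 1 0 - Y 0 1 0 = 0 := hFTC.symm
      rwa [h0, sub_zero] at h1
    have hb1 := hb 1 (right_mem_Icc.2 zero_le_one)
    have hd1 := hd 1 (right_mem_Icc.2 zero_le_one)
    rw [hM]
    show Y 1 = 1
    ext i j
    fin_cases i <;> fin_cases j <;>
      simp_all [Matrix.one_apply]
  refine ⟨key, ?_⟩
  have hφ : HasDerivAt (fun l : ℂ => l⁻¹ * (l - 1) ^ 2) 0 1 := by
    have h1 : HasDerivAt (fun l : ℂ => l⁻¹) (-1) 1 := by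
      simpa using hasDerivAt_inv (one_ne_zero (α := ℂ))
    have h2 : HasDerivAt (fun l : ℂ => (l - 1) ^ 2) 0 1 := by
      simpa [Pi.pow_def] using ((hasDerivAt_id (1 : ℂ)).sub_const 1).pow 2
    simpa [Pi.mul_def] using h1.mul h2
  have hM0 : HasDerivAt M (deriv M 0) 0 := hdiff.hasDerivAt
  have hcomp := HasDerivAt.scomp_of_eq (x := (1:ℂ)) hM0 hφ (by norm_num)
  simp [Function.comp_def] at hcomp
  exact hcomp
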